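/- For all integers a ≥ 0, b ≥ 1, every integer n ≥ 0 and every real x: T^{(a,b−1)}_{n,λ}(x) = (1/2)·(T^{(a,b)}_{n,λ}(x+1) + T^{(a,b)}_{n,λ}(x)). -/

import Mathlib

open Finset PowerSeries

noncomputable def dff (lam x : ℝ) (n : ℕ) : ℝ := ∏ i ∈ Finset.range n, (x - i * lam)

noncomputable def degExp (lam x : ℝ) : PowerSeries ℝ :=
  PowerSeries.mk fun k => dff lam x k / k.factorial

lemma dff_succ (lam x : ℝ) (n : ℕ) : dff lam x (n+1) = dff lam x n * (x - n * lam) := by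
  simp [dff, Finset.prod_range_succ]

lemma dff_add (lam x y : ℝ) : ∀ n : ℕ,
    dff lam (x + y) n
      = ∑ k ∈ Finset.range (n+1), (n.choose k : ℝ) * dff lam x k * dff lam y (n - k) := by
  intro n
  induction n with
  | zero => simp [dff]
  | succ n ih =>
      have hA : ∑ k ∈ Finset.range (n+1),
            (n.choose k : ℝ) * dff lam x k * dff lam y (n+1-k)
          = ∑ k ∈ Finset.range (n+1),
            (n.choose k : ℝ) * dff lam x k * (dff lam y (n-k) * (y - ((n-k : ℕ) : ℝ) * lam)) := by
        refine Finset.sum_congr rfl fun k hk => ?_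
        have hk' : k ≤ n := Nat.lt_succ_iff.mp (Finset.mem_range.mp hk)
        rw [show n + 1 - k = (n - k) + 1 by omega, dff_succ]
      have hB : ∑ k ∈ Finset.range (n+1),
            (n.choose k : ℝ) * dff lam x (k+1) * dff lam y (n-k)
          = ∑ k ∈ Finset.range (n+1),
            (n.choose k : ℝ) * (dff lam x k * (x - k * lam)) * dff lam y (n-k) := by
        refine Finset.sum_congr rfl fun k _ => ?_
        rw [dff_succ]
      rw [dff_succ, ih,
        Finset.sum_range_succ' (fun k => ((n+1).choose k : ℝ) * dff lam x k * dff lam y (n+1-k))]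
      have hsplit : ∑ k ∈ Finset.range (n+1),
            ((n+1).choose (k+1) : ℝ) * dff lam x (k+1) * dff lam y (n+1-(k+1))
          = (∑ k ∈ Finset.range (n+1), (n.choose k : ℝ) * dff lam x (k+1) * dff lam y (n-k))
            + ∑ k ∈ Finset.range (n+1), (n.choose (k+1) : ℝ) * dff lam x (k+1) * dff lam y (n-k) := by
        rw [← Finset.sum_add_distrib]
        refine Finset.sum_congr rfl fun k _ => ?_
        rw [Nat.choose_succ_succ]
        simp only [Nat.add_sub_add_right]
        push_cast
        ring
      have hshift : (∑ k ∈ Finset.range (n+1), (n.choose (k+1) : ℝ) * dff lam x (k+1) * dff lam y (n-k))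
            + ((n+1).choose 0 : ℝ) * dff lam x 0 * dff lam y (n+1-0)
          = ∑ k ∈ Finset.range (n+1), (n.choose k : ℝ) * dff lam x k * dff lam y (n+1-k) := by
        set f : ℕ → ℝ := fun k => (n.choose k : ℝ) * dff lam x k * dff lam y (n+1-k) with hf
        have e1 := Finset.sum_range_succ' f (n+1)
        have e2 := Finset.sum_range_succ f (n+1)
        have hfz : f (n+1) = 0 := by simp [hf, Nat.choose_succ_self]
        have h2 : ∀ k, f (k+1) = (n.choose (k+1) : ℝ) * dff lam x (k+1) * dff lam y (n-k) := by
          intro k; simp [hf, Nat.add_sub_add_right]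
        have h0 : f 0 = ((n+1).choose 0 : ℝ) * dff lam x 0 * dff lam y (n+1-0) := by
          simp [hf]
        rw [e2, hfz, add_zero] at e1
        simp only [h2, h0] at e1
        exact e1.symm
      rw [hsplit]
      have hfin : (∑ k ∈ Finset.range (n+1), (n.choose k : ℝ) * dff lam x (k+1) * dff lam y (n-k))
            + (∑ k ∈ Finset.range (n+1), (n.choose (k+1) : ℝ) * dff lam x (k+1) * dff lam y (n-k)
              + ((n+1).choose 0 : ℝ) * dff lam x 0 * dff lam y (n+1-0))
          = (∑ k ∈ Finset.range (n+1), (n.choose k : ℝ) * dff lam x k * dff lam y (n-k))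
              * (x + y - n * lam) := by
        rw [hshift, hA, hB, Finset.sum_mul, ← Finset.sum_add_distrib]
        refine Finset.sum_congr rfl fun k hk => ?_
        have hk' : k ≤ n := Nat.lt_succ_iff.mp (Finset.mem_range.mp hk)
        have hc : ((n - k : ℕ) : ℝ) = (n : ℝ) - k := by
          push_cast [hk']; ring
        rw [hc]
        ring
      linarith [hfin]

lemma degExp_mul (lam x y : ℝ) : degExp lam x * degExp lam y = degExp lam (x + y) := by
  ext n
  rw [PowerSeries.coeff_mul]
  simp only [degExp, PowerSeries.coeff_mk]
  rw [Finset.Nat.sum_antidiagonal_eq_sum_range_succ_mk, dff_add, Finset.sum_div]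
  refine Finset.sum_congr rfl fun k hk => ?_
  have hk' : k ≤ n := Nat.lt_succ_iff.mp (Finset.mem_range.mp hk)
  rw [Nat.cast_choose ℝ hk']
  have h1 : (k.factorial : ℝ) ≠ 0 := Nat.cast_ne_zero.mpr (Nat.factorial_ne_zero k)
  have h2 : ((n - k).factorial : ℝ) ≠ 0 := Nat.cast_ne_zero.mpr (Nat.factorial_ne_zero _)
  have h3 : (n.factorial : ℝ) ≠ 0 := Nat.cast_ne_zero.mpr (Nat.factorial_ne_zero n)
  field_simp

theorem stmt16 (lam : ℝ) (hlam : lam ≠ 0)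
    (T : ℕ → ℕ → ℝ → ℕ → ℝ)
    (hT : ∀ a b x, (PowerSeries.mk fun n => T a b x n / n.factorial)
          * (degExp lam 1 - 1) ^ a * (degExp lam 1 + 1) ^ b
        = (2 : PowerSeries ℝ) ^ b * (PowerSeries.X : PowerSeries ℝ) ^ a * degExp lam x)
    (a b : ℕ) (hb : 1 ≤ b) (n : ℕ) (x : ℝ) :
    T a (b - 1) x n = (1 / 2) * (T a b (x + 1) n + T a b x n) := by
  obtain ⟨c, rfl⟩ : ∃ c, b = c + 1 := ⟨b - 1, (Nat.succ_pred_eq_of_pos hb).symm⟩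
  set E := degExp lam 1 with hE
  have hE1 : E - 1 ≠ 0 := by
    intro h
    have h' := congrArg (PowerSeries.coeff 1) h
    simp [hE, degExp, dff, PowerSeries.coeff_one] at h'
  have hE2 : E + 1 ≠ 0 := by
    intro h
    have h' := congrArg (PowerSeries.constantCoeff) h
    simp [hE, degExp, dff, PowerSeries.constantCoeff_mk] at h'
    -- constant coeff = 1 + 1 = 2 ≠ 0
  have hQ : (E - 1) ^ a * (E + 1) ^ (c + 1) ≠ 0 :=
    mul_ne_zero (pow_ne_zero _ hE1) (pow_ne_zero _ hE2)
  have h1 := hT a c x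
  have h2 := hT a (c + 1) (x + 1)
  have h3 := hT a (c + 1) x
  have hadd : degExp lam (x + 1) = degExp lam x * E := (degExp_mul lam x 1).symm
  set S : PowerSeries ℝ := PowerSeries.mk fun n => T a c x n / n.factorial with hS
  set S1 : PowerSeries ℝ := PowerSeries.mk fun n => T a (c+1) (x+1) n / n.factorial with hS1
  set S2 : PowerSeries ℝ := PowerSeries.mk fun n => T a (c+1) x n / n.factorial with hS2
  have hmain : (2 : PowerSeries ℝ) * S * ((E - 1) ^ a * (E + 1) ^ (c + 1))
      = (S1 + S2) * ((E - 1) ^ a * (E + 1) ^ (c + 1)) := by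
    rw [pow_succ, pow_succ] at *
    linear_combination (2 * (E + 1)) * h1 - h2 - h3 - ((2:PowerSeries ℝ)^c * 2 * PowerSeries.X ^ a) * hadd
  have hcancel : (2 : PowerSeries ℝ) * S = S1 + S2 := by
    have := mul_right_cancel₀ hQ hmain
    exact this
  have hc := congrArg (PowerSeries.coeff n) hcancel
  rw [two_mul] at hc
  simp only [map_add, PowerSeries.coeff_mk, hS, hS1, hS2] at hc
  simp only [Nat.add_sub_cancel]
  have h3 : (n.factorial : ℝ) ≠ 0 := Nat.cast_ne_zero.mpr (Nat.factorial_ne_zero n)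
  field_simp at hc ⊢
  linarith
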